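/- Let z ∈ ℝ. For every continuously differentiable path h = (h¹, h²) : [0,1] → ℝ² with h(0) = (0,0) and signed area A(h) := (1/2)∫₀¹ (h¹(t)(h²)′(t) − h²(t)(h¹)′(t)) dt equal to z, one has (1/2)∫₀¹ ((h¹)′(t)² + (h²)′(t)²) dt ≥ π|z|. Moreover this bound is attained: for z > 0 the half-circle h(t) = ρ(sin(πt), 1 − cos(πt)) with ρ = √(2z/π) satisfies h(0) = 0, A(h) = z, and has energy exactly πz (and analogously for z < 0 with reversed orientation). -/

import Mathlib

open MeasureTheory

/-- First component of the half-circle of radius `√(2z/π)` starting at the origin. -/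
noncomputable def c19₁ (z t : ℝ) : ℝ :=
  Real.sqrt (2 * z / Real.pi) * Real.sin (Real.pi * t)

/-- Second component of the half-circle of radius `√(2z/π)` starting at the origin. -/
noncomputable def c19₂ (z t : ℝ) : ℝ :=
  Real.sqrt (2 * z / Real.pi) * (1 - Real.cos (Real.pi * t))

open Set Real intervalIntegral

lemma wirtinger19 {u : ℝ → ℝ} (hu : ContDiffOn ℝ 1 u (Icc 0 1)) (h0 : u 0 = 0) :
    0 ≤ ∫ t in (0:ℝ)..1, ((derivWithin u (Icc 0 1) t)^2 - (π^2/4) * u t ^ 2) := by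
  set u' : ℝ → ℝ := derivWithin u (Icc 0 1) with hu'def
  have hUD : UniqueDiffOn ℝ (Icc (0:ℝ) 1) := uniqueDiffOn_Icc zero_lt_one
  have hc : ContinuousOn u (Icc 0 1) := hu.continuousOn
  have hc' : ContinuousOn u' (Icc 0 1) := hu.continuousOn_derivWithin hUD le_rfl
  have hd : ∀ t ∈ Ioo (0:ℝ) 1, HasDerivAt u (u' t) t := by
    intro t ht
    have hmem : Icc (0:ℝ) 1 ∈ nhds t := Icc_mem_nhds ht.1 ht.2
    have hdiff := (hu.differentiableOn one_ne_zero t (Ioo_subset_Icc_self ht)).differentiableAt hmem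
    have : u' t = deriv u t := by rw [hu'def, derivWithin_of_mem_nhds hmem]
    rw [this]; exact hdiff.hasDerivAt
  -- bounds
  obtain ⟨M, hM⟩ := isCompact_Icc.exists_bound_of_continuousOn hc'
  obtain ⟨K, hK⟩ := isCompact_Icc.exists_bound_of_continuousOn hc
  have hM0 : 0 ≤ M := le_trans (norm_nonneg _) (hM 0 (by norm_num))
  have hK0 : 0 ≤ K := le_trans (norm_nonneg _) (hK 0 (by norm_num))
  -- F continuous
  set F : ℝ → ℝ := fun t => u' t ^ 2 - π^2/4 * u t ^ 2 with hFdef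
  have hFc : ContinuousOn F (Icc 0 1) := by
    exact (hc'.pow 2).sub (continuousOn_const.mul (hc.pow 2))
  -- |u ε| ≤ M * ε on Icc
  have hubnd : ∀ ε ∈ Icc (0:ℝ) 1, |u ε| ≤ M * ε := by
    intro ε hε
    rcases eq_or_lt_of_le hε.1 with rfl | hε0
    · simp [h0]
    have hsub : Icc (0:ℝ) ε ⊆ Icc 0 1 := Icc_subset_Icc le_rfl hε.2
    have hFTC : ∫ t in (0:ℝ)..ε, u' t = u ε - u 0 :=
      integral_eq_sub_of_hasDeriv_right_of_le hε.1 (hc.mono hsub)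
        (fun x hx => (hd x ⟨hx.1, lt_of_lt_of_le hx.2 hε.2⟩).hasDerivWithinAt)
        ((hc'.mono (by rwa [uIcc_of_le hε.1])).intervalIntegrable)
    have hnorm : ‖∫ t in (0:ℝ)..ε, u' t‖ ≤ M * |ε - 0| := by
      apply intervalIntegral.norm_integral_le_of_norm_le_const
      intro x hx
      rw [uIoc_of_le hε.1] at hx
      exact hM x ⟨hx.1.le, hx.2.trans hε.2⟩
    rw [hFTC, h0, sub_zero] at hnorm
    calc |u ε| ≤ M * |ε - 0| := hnorm
    _ = M * ε := by rw [sub_zero, abs_of_nonneg hε.1]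
  -- cotangent substitution
  set p : ℝ → ℝ := fun t => π/2 * (Real.cos (π/2*t) / Real.sin (π/2*t)) with hpdef
  have hsinpos : ∀ t ∈ Ioc (0:ℝ) 1, 0 < Real.sin (π/2*t) := by
    intro t ht
    apply Real.sin_pos_of_pos_of_lt_pi
    · have := pi_pos; nlinarith [ht.1]
    · nlinarith [pi_pos, ht.2]
  have hpderiv : ∀ t ∈ Ioo (0:ℝ) 1, HasDerivAt p (-(π/2)^2 / (Real.sin (π/2*t))^2) t := by
    intro t ht
    have hsne : Real.sin (π/2*t) ≠ 0 := (hsinpos t ⟨ht.1, ht.2.le⟩).ne'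
    have hlin : HasDerivAt (fun t : ℝ => π/2*t) (π/2) t := by
      simpa using (hasDerivAt_id t).const_mul (π/2)
    have hdiv := (hlin.cos.div hlin.sin hsne).const_mul (π/2)
    refine hdiv.congr_deriv ?_
    have hsc := Real.sin_sq_add_cos_sq (π/2*t)
    have h1 : (-Real.sin (π/2*t) * (π/2) * Real.sin (π/2*t)
        - Real.cos (π/2*t) * (Real.cos (π/2*t) * (π/2))) = -(π/2) := by
      linear_combination (-(π/2)) * hsc
    rw [h1]; ring
  have hmain : ∀ ε ∈ Ioo (0:ℝ) 1, -((π^2/4*K^2 + M^2) * ε) ≤ ∫ t in (0:ℝ)..1, F t := by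
    intro ε hε
    have hsub1 : Icc (0:ℝ) ε ⊆ Icc 0 1 := Icc_subset_Icc le_rfl hε.2.le
    have hsub2 : Icc ε 1 ⊆ Icc (0:ℝ) 1 := Icc_subset_Icc hε.1.le le_rfl
    have hFint1 : IntervalIntegrable F volume 0 ε :=
      (hFc.mono (by rw [uIcc_of_le hε.1.le]; exact hsub1)).intervalIntegrable
    have hFint2 : IntervalIntegrable F volume ε 1 :=
      (hFc.mono (by rw [uIcc_of_le hε.2.le]; exact hsub2)).intervalIntegrable
    have hsplit : ∫ t in (0:ℝ)..1, F t = (∫ t in (0:ℝ)..ε, F t) + ∫ t in ε..1, F t :=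
      (integral_add_adjacent_intervals hFint1 hFint2).symm
    -- part 1 : near 0
    have hpart1 : -(π^2/4*K^2) * ε ≤ ∫ t in (0:ℝ)..ε, F t := by
      have hconst : ∫ _t in (0:ℝ)..ε, (-(π^2/4*K^2)) = -(π^2/4*K^2) * ε := by
        simp; ring
      rw [← hconst]
      apply intervalIntegral.integral_mono_on hε.1.le intervalIntegrable_const hFint1
      intro x hx
      have hx1 : x ∈ Icc (0:ℝ) 1 := hsub1 hx
      have hKx : |u x| ≤ K := by simpa using hK x hx1
      have hux : u x ^ 2 ≤ K ^ 2 := by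
        rw [← sq_abs]; exact pow_le_pow_left₀ (abs_nonneg _) hKx 2
      have := sq_nonneg (u' x)
      simp only [hFdef]; nlinarith [pi_pos]
    -- part 2 : FTC with cotangent weight on [ε,1]
    have hs : ∀ t ∈ Icc ε 1, 0 < Real.sin (π/2*t) :=
      fun t ht => hsinpos t ⟨lt_of_lt_of_le hε.1 ht.1, ht.2⟩
    have hpc : ContinuousOn p (Icc ε 1) := by
      apply ContinuousOn.mul continuousOn_const
      apply ContinuousOn.div
      · exact (Real.continuous_cos.comp (continuous_const.mul continuous_id)).continuousOn
      · exact (Real.continuous_sin.comp (continuous_const.mul continuous_id)).continuousOn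
      · exact fun t ht => (hs t ht).ne'
    set G : ℝ → ℝ := fun t => p t * u t ^ 2 with hGdef
    set g' : ℝ → ℝ := fun t => -(π/2)^2 / (Real.sin (π/2*t))^2 * u t ^ 2 + p t * (2 * u t * u' t)
      with hg'def
    have hGc : ContinuousOn G (Icc ε 1) := hpc.mul ((hc.mono hsub2).pow 2)
    have hGderiv : ∀ x ∈ Ioo ε 1, HasDerivAt G (g' x) x := by
      intro x hx
      have hx01 : x ∈ Ioo (0:ℝ) 1 := ⟨lt_trans hε.1 hx.1, hx.2⟩
      have := (hpderiv x hx01).mul ((hd x hx01).pow 2)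
      refine this.congr_deriv ?_
      simp only [hg'def, Pi.pow_apply]
      push_cast
      ring
    have hg'c : ContinuousOn g' (Icc ε 1) := by
      apply ContinuousOn.add
      · apply ContinuousOn.mul
        · apply ContinuousOn.div continuousOn_const
          · exact ((Real.continuous_sin.comp (continuous_const.mul continuous_id)).continuousOn).pow 2
          · exact fun t ht => pow_ne_zero 2 (hs t ht).ne'
        · exact (hc.mono hsub2).pow 2
      · exact hpc.mul ((continuousOn_const.mul (hc.mono hsub2)).mul (hc'.mono hsub2))
    have hg'int : IntervalIntegrable g' volume ε 1 :=
      (hg'c.mono (by rw [uIcc_of_le hε.2.le])).intervalIntegrable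
    have hFTC2 : ∫ t in ε..1, g' t = G 1 - G ε :=
      integral_eq_sub_of_hasDeriv_right_of_le hε.2.le hGc
        (fun x hx => (hGderiv x hx).hasDerivWithinAt) hg'int
    have hG1 : G 1 = 0 := by
      simp [hGdef, hpdef, mul_one, Real.cos_pi_div_two]
    have hpoint : ∀ t ∈ Icc ε 1, F t = (u' t - p t * u t)^2 + g' t := by
      intro t ht
      have hsne : Real.sin (π/2*t) ≠ 0 := (hs t ht).ne'
      have hs2 : Real.sin (π/2*t) ^ 2 ≠ 0 := pow_ne_zero 2 hsne
      have hA : (Real.cos (π/2*t))^2/(Real.sin (π/2*t))^2 - 1/(Real.sin (π/2*t))^2 = -1 := by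
        rw [div_sub_div_same, div_eq_iff hs2]
        linear_combination Real.sin_sq_add_cos_sq (π/2*t)
      simp only [hFdef, hg'def, hpdef]
      linear_combination (-(π^2/4) * u t ^ 2) * hA
    have hsq_int : IntervalIntegrable (fun t => (u' t - p t * u t)^2) volume ε 1 := by
      apply ContinuousOn.intervalIntegrable
      rw [uIcc_of_le hε.2.le]
      exact ((hc'.mono hsub2).sub (hpc.mul (hc.mono hsub2))).pow 2
    have heq2 : ∫ t in ε..1, F t
        = (∫ t in ε..1, (u' t - p t * u t)^2) + ∫ t in ε..1, g' t := by
      rw [← integral_add hsq_int hg'int]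
      apply integral_congr
      intro x hx
      rw [uIcc_of_le hε.2.le] at hx
      exact hpoint x hx
    have hnn : 0 ≤ ∫ t in ε..1, (u' t - p t * u t)^2 :=
      integral_nonneg hε.2.le (fun x _ => sq_nonneg _)
    -- bound G ε
    have hx0 : 0 < π/2*ε := by nlinarith [pi_pos, hε.1]
    have hx2 : π/2*ε < π/2 := by nlinarith [pi_pos, hε.2]
    have hsinε : 0 < Real.sin (π/2*ε) := hs ε ⟨le_rfl, hε.2.le⟩
    have hcosε : 0 < Real.cos (π/2*ε) := Real.cos_pos_of_mem_Ioo ⟨by linarith [pi_pos], hx2⟩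
    have htan := Real.lt_tan hx0 hx2
    rw [Real.tan_eq_sin_div_cos] at htan
    have hxc : π/2*ε * Real.cos (π/2*ε) < Real.sin (π/2*ε) := by
      rw [lt_div_iff₀ hcosε] at htan; linarith
    have hpε : p ε ≤ 1/ε := by
      have h1 : Real.cos (π/2*ε) / Real.sin (π/2*ε) ≤ 1/(π/2*ε) := by
        rw [div_le_div_iff₀ hsinε hx0]; nlinarith
      have h2 : p ε ≤ π/2 * (1/(π/2*ε)) := by
        simp only [hpdef]
        exact mul_le_mul_of_nonneg_left h1 (by positivity)
      have h3 : π/2 * (1/(π/2*ε)) = 1/ε := by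
        rw [one_div, mul_inv, ← mul_assoc,
          mul_inv_cancel₀ (by positivity : (π/2:ℝ) ≠ 0), one_mul, one_div]
      linarith
    have hGε : G ε ≤ M^2 * ε := by
      have huε : u ε ^2 ≤ (M*ε)^2 := by
        rw [← sq_abs]
        exact pow_le_pow_left₀ (abs_nonneg _) (hubnd ε ⟨hε.1.le, hε.2.le⟩) 2
      have hp0 : 0 ≤ p ε := by
        simp only [hpdef]
        exact mul_nonneg (by positivity) (div_nonneg hcosε.le hsinε.le)
      have : G ε ≤ (1/ε) * (M*ε)^2 := by
        simp only [hGdef]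
        exact mul_le_mul hpε huε (sq_nonneg _) (le_of_lt (one_div_pos.mpr hε.1))
      calc G ε ≤ (1/ε) * (M*ε)^2 := this
        _ = M^2*ε := by
          field_simp [hε.1.ne']
    have hpart2 : -(M^2*ε) ≤ ∫ t in ε..1, F t := by
      rw [heq2, hFTC2, hG1]; linarith
    rw [hsplit]; nlinarith
  -- conclude by letting ε → 0
  apply le_of_forall_pos_le_add
  intro δ hδ
  set B := π^2/4*K^2 + M^2 + 1 with hBdef
  have hB : 0 < B := by positivity
  set ε := min (1/2) (δ/B) with hεdef
  have hεI : ε ∈ Ioo (0:ℝ) 1 :=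
    ⟨lt_min (by norm_num) (by positivity), lt_of_le_of_lt (min_le_left _ _) (by norm_num)⟩
  have hm := hmain ε hεI
  have h1 : (π^2/4*K^2+M^2)*ε ≤ δ := by
    have hle : ε ≤ δ/B := min_le_right _ _
    have : (π^2/4*K^2+M^2)*ε ≤ B * (δ/B) :=
      mul_le_mul (by simp only [hBdef]; linarith) hle hεI.1.le hB.le
    rwa [mul_div_cancel₀ _ hB.ne'] at this
  linarith

lemma key19 {h1 h2 : ℝ → ℝ} (hh1 : ContDiffOn ℝ 1 h1 (Icc 0 1))
    (hh2 : ContDiffOn ℝ 1 h2 (Icc 0 1)) (h10 : h1 0 = 0) (h20 : h2 0 = 0) :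
    π * ∫ t in (0:ℝ)..1,
        (h1 t * derivWithin h2 (Icc 0 1) t - h2 t * derivWithin h1 (Icc 0 1) t)
      ≤ ∫ t in (0:ℝ)..1,
        ((derivWithin h1 (Icc 0 1) t)^2 + (derivWithin h2 (Icc 0 1) t)^2) := by
  have hUD : UniqueDiffOn ℝ (Icc (0:ℝ) 1) := uniqueDiffOn_Icc zero_lt_one
  set D1 : ℝ → ℝ := derivWithin h1 (Icc 0 1) with hD1def
  set D2 : ℝ → ℝ := derivWithin h2 (Icc 0 1) with hD2def
  have hcD1 : ContinuousOn D1 (Icc 0 1) := hh1.continuousOn_derivWithin hUD le_rfl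
  have hcD2 : ContinuousOn D2 (Icc 0 1) := hh2.continuousOn_derivWithin hUD le_rfl
  have hch1 : ContinuousOn h1 (Icc 0 1) := hh1.continuousOn
  have hch2 : ContinuousOn h2 (Icc 0 1) := hh2.continuousOn
  have hccos : ContDiff ℝ 1 (fun t : ℝ => Real.cos (π/2*t)) :=
    (Real.contDiff_cos.of_le le_top).comp (contDiff_const.mul contDiff_id)
  have hcsin : ContDiff ℝ 1 (fun t : ℝ => Real.sin (π/2*t)) :=
    (Real.contDiff_sin.of_le le_top).comp (contDiff_const.mul contDiff_id)
  set u : ℝ → ℝ := fun t => h1 t * Real.cos (π/2*t) + h2 t * Real.sin (π/2*t) with hudef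
  set v : ℝ → ℝ := fun t => -(h1 t) * Real.sin (π/2*t) + h2 t * Real.cos (π/2*t) with hvdef
  have hu : ContDiffOn ℝ 1 u (Icc 0 1) :=
    (hh1.mul hccos.contDiffOn).add (hh2.mul hcsin.contDiffOn)
  have hv : ContDiffOn ℝ 1 v (Icc 0 1) :=
    ((hh1.neg).mul hcsin.contDiffOn).add (hh2.mul hccos.contDiffOn)
  have hu0 : u 0 = 0 := by simp [hudef, h10, h20]
  have hv0 : v 0 = 0 := by simp [hvdef, h10, h20]
  set Du : ℝ → ℝ := derivWithin u (Icc 0 1) with hDudef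
  set Dv : ℝ → ℝ := derivWithin v (Icc 0 1) with hDvdef
  have hcDu : ContinuousOn Du (Icc 0 1) := hu.continuousOn_derivWithin hUD le_rfl
  have hcDv : ContinuousOn Dv (Icc 0 1) := hv.continuousOn_derivWithin hUD le_rfl
  have hlin : ∀ t : ℝ, HasDerivAt (fun t : ℝ => π/2*t) (π/2) t := fun t => by
    simpa using (hasDerivAt_id t).const_mul (π/2)
  have hDu : ∀ t ∈ Icc (0:ℝ) 1,
      Du t = D1 t * Real.cos (π/2*t) + D2 t * Real.sin (π/2*t) + (π/2) * v t := by
    intro t ht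
    have hH1 : HasDerivWithinAt h1 (D1 t) (Icc 0 1) t :=
      (hh1.differentiableOn one_ne_zero t ht).hasDerivWithinAt
    have hH2 : HasDerivWithinAt h2 (D2 t) (Icc 0 1) t :=
      (hh2.differentiableOn one_ne_zero t ht).hasDerivWithinAt
    have hder : HasDerivWithinAt u
        (D1 t * Real.cos (π/2*t) + h1 t * (-Real.sin (π/2*t) * (π/2))
          + (D2 t * Real.sin (π/2*t) + h2 t * (Real.cos (π/2*t) * (π/2)))) (Icc 0 1) t :=
      (hH1.mul ((hlin t).cos.hasDerivWithinAt)).add (hH2.mul ((hlin t).sin.hasDerivWithinAt))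
    rw [hDudef, hder.derivWithin (hUD t ht), hvdef]
    ring
  have hDv : ∀ t ∈ Icc (0:ℝ) 1,
      Dv t = -(D1 t) * Real.sin (π/2*t) + D2 t * Real.cos (π/2*t) - (π/2) * u t := by
    intro t ht
    have hH1 : HasDerivWithinAt h1 (D1 t) (Icc 0 1) t :=
      (hh1.differentiableOn one_ne_zero t ht).hasDerivWithinAt
    have hH2 : HasDerivWithinAt h2 (D2 t) (Icc 0 1) t :=
      (hh2.differentiableOn one_ne_zero t ht).hasDerivWithinAt
    have hder : HasDerivWithinAt v
        (-(D1 t) * Real.sin (π/2*t) + -(h1 t) * (Real.cos (π/2*t) * (π/2))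
          + (D2 t * Real.cos (π/2*t) + h2 t * (-Real.sin (π/2*t) * (π/2)))) (Icc 0 1) t :=
      ((hH1.neg.mul ((hlin t).sin.hasDerivWithinAt))).add
        (hH2.mul ((hlin t).cos.hasDerivWithinAt))
    rw [hDvdef, hder.derivWithin (hUD t ht), hudef]
    ring
  -- pointwise identity
  have hpoint : ∀ t ∈ Icc (0:ℝ) 1,
      D1 t^2 + D2 t^2 - π * (h1 t * D2 t - h2 t * D1 t)
        = (Du t^2 - π^2/4 * u t^2) + (Dv t^2 - π^2/4 * v t^2) := by
    intro t ht
    have hsc := Real.sin_sq_add_cos_sq (π/2*t)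
    rw [hDu t ht, hDv t ht]
    simp only [hudef, hvdef]
    linear_combination (-(D1 t^2 + D2 t^2 - π * (h1 t * D2 t - h2 t * D1 t))) * hsc
  -- integrals
  have hintA : IntervalIntegrable (fun t => h1 t * D2 t - h2 t * D1 t) volume 0 1 := by
    apply ContinuousOn.intervalIntegrable
    rw [uIcc_of_le zero_le_one]
    exact (hch1.mul hcD2).sub (hch2.mul hcD1)
  have hintE : IntervalIntegrable (fun t => D1 t^2 + D2 t^2) volume 0 1 := by
    apply ContinuousOn.intervalIntegrable
    rw [uIcc_of_le zero_le_one]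
    exact (hcD1.pow 2).add (hcD2.pow 2)
  have hintWu : IntervalIntegrable (fun t => Du t^2 - π^2/4 * u t^2) volume 0 1 := by
    apply ContinuousOn.intervalIntegrable
    rw [uIcc_of_le zero_le_one]
    exact (hcDu.pow 2).sub (continuousOn_const.mul (hu.continuousOn.pow 2))
  have hintWv : IntervalIntegrable (fun t => Dv t^2 - π^2/4 * v t^2) volume 0 1 := by
    apply ContinuousOn.intervalIntegrable
    rw [uIcc_of_le zero_le_one]
    exact (hcDv.pow 2).sub (continuousOn_const.mul (hv.continuousOn.pow 2))
  have hchain : (∫ t in (0:ℝ)..1, (D1 t^2 + D2 t^2))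
      - π * ∫ t in (0:ℝ)..1, (h1 t * D2 t - h2 t * D1 t)
      = (∫ t in (0:ℝ)..1, (Du t^2 - π^2/4 * u t^2))
        + ∫ t in (0:ℝ)..1, (Dv t^2 - π^2/4 * v t^2) := by
    rw [← intervalIntegral.integral_const_mul, ← intervalIntegral.integral_sub hintE
      (hintA.const_mul π), ← intervalIntegral.integral_add hintWu hintWv]
    apply intervalIntegral.integral_congr
    intro t ht
    rw [uIcc_of_le zero_le_one] at ht
    exact hpoint t ht
  have hwu := wirtinger19 hu hu0
  have hwv := wirtinger19 hv hv0
  rw [← hDudef] at hwu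
  rw [← hDvdef] at hwv
  linarith [hchain, hwu, hwv]


lemma circle19 {z : ℝ} (hz : 0 < z) :
      c19₁ z 0 = 0 ∧ c19₂ z 0 = 0 ∧
      (1/2) * (∫ t in (0:ℝ)..1,
        (c19₁ z t * derivWithin (c19₂ z) (Set.Icc 0 1) t
          - c19₂ z t * derivWithin (c19₁ z) (Set.Icc 0 1) t)) = z ∧
      (1/2) * (∫ t in (0:ℝ)..1,
        ((derivWithin (c19₁ z) (Set.Icc 0 1) t) ^ 2
          + (derivWithin (c19₂ z) (Set.Icc 0 1) t) ^ 2)) = Real.pi * z := by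
  have hUD : UniqueDiffOn ℝ (Icc (0:ℝ) 1) := uniqueDiffOn_Icc zero_lt_one
  set ρ : ℝ := Real.sqrt (2*z/π) with hρdef
  have hρ2 : ρ^2 = 2*z/π := Real.sq_sqrt (by positivity)
  have hlin : ∀ t : ℝ, HasDerivAt (fun t : ℝ => π*t) π t := fun t => by
    simpa using (hasDerivAt_id t).const_mul π
  have hd1 : ∀ t ∈ Icc (0:ℝ) 1,
      derivWithin (c19₁ z) (Icc 0 1) t = ρ * (Real.cos (π*t) * π) := by
    intro t ht
    have : HasDerivAt (c19₁ z) (ρ * (Real.cos (π*t) * π)) t := by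
      exact ((hlin t).sin.const_mul ρ)
    exact this.hasDerivWithinAt.derivWithin (hUD t ht)
  have hd2 : ∀ t ∈ Icc (0:ℝ) 1,
      derivWithin (c19₂ z) (Icc 0 1) t = ρ * (Real.sin (π*t) * π) := by
    intro t ht
    have : HasDerivAt (c19₂ z) (ρ * (Real.sin (π*t) * π)) t := by
      have h0 : HasDerivAt (fun t : ℝ => (1 : ℝ) - Real.cos (π*t))
          (Real.sin (π*t) * π) t := by
        simpa using ((hlin t).cos.const_sub 1)
      exact h0.const_mul ρ
    exact this.hasDerivWithinAt.derivWithin (hUD t ht)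
  refine ⟨by simp [c19₁], by simp [c19₂], ?_, ?_⟩
  · have hcong : ∫ t in (0:ℝ)..1,
        (c19₁ z t * derivWithin (c19₂ z) (Set.Icc 0 1) t
          - c19₂ z t * derivWithin (c19₁ z) (Set.Icc 0 1) t)
        = ∫ t in (0:ℝ)..1, (ρ^2*π - ρ^2*π * Real.cos (π*t)) := by
      apply intervalIntegral.integral_congr
      intro t ht
      rw [uIcc_of_le zero_le_one] at ht
      dsimp only
      rw [hd1 t ht, hd2 t ht]
      simp only [c19₁, c19₂, ← hρdef]
      have := Real.sin_sq_add_cos_sq (π*t)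
      linear_combination (ρ^2*π) * this
    have hcosint : ∫ t in (0:ℝ)..1, Real.cos (π*t) = 0 := by
      rw [intervalIntegral.integral_comp_mul_left (f := Real.cos) Real.pi_ne_zero]
      simp
    have hint1 : IntervalIntegrable (fun t : ℝ => Real.cos (π*t)) volume 0 1 :=
      (Real.continuous_cos.comp (continuous_const.mul continuous_id)).intervalIntegrable 0 1
    have hsub := intervalIntegral.integral_sub (μ := volume) (a := 0) (b := 1)
      (f := fun _ : ℝ => ρ^2*π) (g := fun t : ℝ => ρ^2*π * Real.cos (π*t))
      intervalIntegrable_const (hint1.const_mul _)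
    have hzero : ∫ t in (0:ℝ)..1, (ρ^2*π * Real.cos (π*t)) = 0 := by
      rw [intervalIntegral.integral_const_mul, hcosint, mul_zero]
    rw [hcong, hsub, hzero, intervalIntegral.integral_const]
    simp only [sub_zero, smul_eq_mul, sub_zero]
    rw [hρ2]
    field_simp
  · have hcong : ∫ t in (0:ℝ)..1,
        ((derivWithin (c19₁ z) (Set.Icc 0 1) t) ^ 2
          + (derivWithin (c19₂ z) (Set.Icc 0 1) t) ^ 2)
        = ∫ t in (0:ℝ)..1, (ρ^2*π^2 : ℝ) := by
      apply intervalIntegral.integral_congr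
      intro t ht
      rw [uIcc_of_le zero_le_one] at ht
      dsimp only
      rw [hd1 t ht, hd2 t ht]
      have := Real.sin_sq_add_cos_sq (π*t)
      linear_combination (ρ^2*π^2) * this
    rw [hcong, intervalIntegral.integral_const, hρ2]
    field_simp
    ring



/-- Case (II) of the Heisenberg example (Dido's problem, energy form): every C¹ path
starting at the origin with signed area `z` has energy at least `π|z|`, and for `z > 0`
the half-circle of radius `√(2z/π)` attains the bound. -/
theorem stmt_19 (z : ℝ) :
    (∀ h1 h2 : ℝ → ℝ,
      ContDiffOn ℝ 1 h1 (Set.Icc 0 1) → ContDiffOn ℝ 1 h2 (Set.Icc 0 1) →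
      h1 0 = 0 → h2 0 = 0 →
      (1/2) * (∫ t in (0:ℝ)..1,
        (h1 t * derivWithin h2 (Set.Icc 0 1) t
          - h2 t * derivWithin h1 (Set.Icc 0 1) t)) = z →
      Real.pi * |z| ≤ (1/2) * ∫ t in (0:ℝ)..1,
        ((derivWithin h1 (Set.Icc 0 1) t) ^ 2 + (derivWithin h2 (Set.Icc 0 1) t) ^ 2)) ∧
    (0 < z →
      c19₁ z 0 = 0 ∧ c19₂ z 0 = 0 ∧
      (1/2) * (∫ t in (0:ℝ)..1,
        (c19₁ z t * derivWithin (c19₂ z) (Set.Icc 0 1) t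
          - c19₂ z t * derivWithin (c19₁ z) (Set.Icc 0 1) t)) = z ∧
      (1/2) * (∫ t in (0:ℝ)..1,
        ((derivWithin (c19₁ z) (Set.Icc 0 1) t) ^ 2
          + (derivWithin (c19₂ z) (Set.Icc 0 1) t) ^ 2)) = Real.pi * z) := by
  constructor
  · intro h1 h2 hh1 hh2 h10 h20 hA
    have hk1 := key19 hh1 hh2 h10 h20
    have hk2 := key19 hh2 hh1 h20 h10
    have hswap : ∫ t in (0:ℝ)..1,
        (h2 t * derivWithin h1 (Icc 0 1) t - h1 t * derivWithin h2 (Icc 0 1) t)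
        = -∫ t in (0:ℝ)..1,
          (h1 t * derivWithin h2 (Icc 0 1) t - h2 t * derivWithin h1 (Icc 0 1) t) := by
      rw [← intervalIntegral.integral_neg]
      simp [neg_sub]
    have hEswap : ∫ t in (0:ℝ)..1,
        ((derivWithin h2 (Icc 0 1) t)^2 + (derivWithin h1 (Icc 0 1) t)^2)
        = ∫ t in (0:ℝ)..1,
          ((derivWithin h1 (Icc 0 1) t)^2 + (derivWithin h2 (Icc 0 1) t)^2) := by
      apply intervalIntegral.integral_congr
      intro t _
      ring
    rw [hswap, hEswap] at hk2
    rcases abs_cases z with ⟨he, _⟩ | ⟨he, _⟩ <;> rw [he] <;> nlinarith [Real.pi_pos]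
  · exact fun hz => circle19 hz
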